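/- Let $Q_0:\mathcal{M}\to\mathcal{M}$ satisfy Hypotheses 2 (continuity along locally uniform convergence giving a.e. convergence of images, order preservation, translation invariance, and bistability with middle equilibrium $\alpha\in(0,1)$). Suppose a constant $\underline{c}$ and $\underline{\psi}\in\mathcal{M}$ with $\underline{\psi}(0)=0$ and $\underline{\psi}(+\infty)\in(\alpha,1]$ satisfy $\underline{\psi}(x)\le (Q_0[\underline{\psi}])(x-\underline{c})$ for all $x$, and a constant $\overline{c}$ and $\overline{\psi}\in\mathcal{M}$ with $\overline{\psi}(-\infty)\in[0,\alpha)$ and $\overline{\psi}(0)=1$ satisfy $(Q_0[\overline{\psi}])(x-\overline{c})\le\overline{\psi}(x)$ for all $x$. Then $\underline{c}\le\overline{c}$. -/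
import Mathlib


open MeasureTheory Filter Topology

/-- `MemM u` : `u` is monotone nondecreasing, left continuous, with values in `[0,1]`. -/
def MemM (u : ℝ → ℝ) : Prop :=
  Monotone u ∧ (∀ x : ℝ, Tendsto u (nhdsWithin x (Set.Iio x)) (nhds (u x))) ∧
    ∀ x : ℝ, u x ∈ Set.Icc (0:ℝ) 1

lemma memM_shift {u : ℝ → ℝ} (hu : MemM u) (c : ℝ) : MemM (fun y => u (y - c)) := by
  obtain ⟨hmono, hlc, hbd⟩ := hu
  refine ⟨fun a b hab => hmono (by linarith), fun x => ?_, fun x => hbd _⟩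
  have h1 : Tendsto (fun y : ℝ => y - c) (nhdsWithin x (Set.Iio x))
      (nhdsWithin (x - c) (Set.Iio (x - c))) := by
    apply tendsto_nhdsWithin_of_tendsto_nhds_of_eventually_within
    · exact (continuous_id.sub continuous_const).continuousAt.tendsto.mono_left
        nhdsWithin_le_nhds
    · filter_upwards [self_mem_nhdsWithin] with y hy
      exact sub_lt_sub_right hy c
  exact (hlc (x - c)).comp h1

theorem stmt3 (Q0 : (ℝ → ℝ) → (ℝ → ℝ)) (α : ℝ)
    -- Hypotheses 2
    (hmap : ∀ u, MemM u → MemM (Q0 u))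
    (hcont : ∀ (uk : ℕ → ℝ → ℝ) (u : ℝ → ℝ), (∀ k, MemM (uk k)) → MemM u →
      (∀ a b : ℝ, TendstoUniformlyOn (fun k => uk k) u atTop (Set.Icc a b)) →
      ∀ᵐ x : ℝ ∂volume, Tendsto (fun k => Q0 (uk k) x) atTop (nhds (Q0 u x)))
    (hord : ∀ u v, MemM u → MemM v → (∀ x, u x ≤ v x) → ∀ x, Q0 u x ≤ Q0 v x)
    (htrans : ∀ (c : ℝ) (u : ℝ → ℝ), MemM u →
      ∀ x, Q0 (fun y => u (y - c)) x = Q0 u (x - c))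
    (hα : α ∈ Set.Ioo (0:ℝ) 1)
    (hfix : ∀ x, Q0 (fun _ => α) x = α)
    (hlow : ∀ γ : ℝ, 0 < γ → γ < α → ∀ x, Q0 (fun _ => γ) x < γ)
    (hhigh : ∀ γ : ℝ, α < γ → γ < 1 → ∀ x, γ < Q0 (fun _ => γ) x)
    -- sub and super solutions
    (cu co : ℝ) (ψu ψo : ℝ → ℝ) (hψu : MemM ψu) (hψo : MemM ψo)
    (hψu0 : ψu 0 = 0) (Lu : ℝ) (hLu : Tendsto ψu atTop (nhds Lu))
    (hLu' : Lu ∈ Set.Ioc α 1)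
    (hsub : ∀ x, ψu x ≤ Q0 ψu (x - cu))
    (hψo0 : ψo 0 = 1) (Lo : ℝ) (hLo : Tendsto ψo atBot (nhds Lo))
    (hLo' : Lo ∈ Set.Ico (0:ℝ) α)
    (hsup : ∀ x, Q0 ψo (x - co) ≤ ψo x) :
    cu ≤ co := by
  -- iterates preserve MemM
  have hiterM : ∀ (n : ℕ) (v : ℝ → ℝ), MemM v → MemM (Q0^[n] v) := by
    intro n
    induction n with
    | zero => intro v hv; simpa using hv
    | succ n ih =>
        intro v hv
        rw [Function.iterate_succ']
        exact hmap _ (ih v hv)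
  -- iterates preserve order
  have hord_iter : ∀ (n : ℕ) (u v : ℝ → ℝ), MemM u → MemM v → (∀ x, u x ≤ v x) →
      ∀ x, Q0^[n] u x ≤ Q0^[n] v x := by
    intro n
    induction n with
    | zero => intro u v _ _ h x; simpa using h x
    | succ n ih =>
        intro u v hu hv h x
        rw [Function.iterate_succ']
        exact hord _ _ (hiterM n u hu) (hiterM n v hv) (ih u v hu hv h) x
  -- iterates of ψu remain subsolutions
  have hsub_iter : ∀ (n : ℕ) (x : ℝ), Q0^[n] ψu x ≤ Q0 (Q0^[n] ψu) (x - cu) := by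
    intro n
    induction n with
    | zero => simpa using hsub
    | succ n ih =>
        intro x
        have hM : MemM (Q0^[n] ψu) := hiterM n ψu hψu
        have hMQ : MemM (Q0 (Q0^[n] ψu)) := hmap _ hM
        rw [Function.iterate_succ']
        show Q0 (Q0^[n] ψu) x ≤ Q0 (Q0 (Q0^[n] ψu)) (x - cu)
        calc Q0 (Q0^[n] ψu) x
            ≤ Q0 (fun y => Q0 (Q0^[n] ψu) (y - cu)) x :=
              hord _ _ hM (memM_shift hMQ cu) ih x
          _ = Q0 (Q0 (Q0^[n] ψu)) (x - cu) := htrans cu _ hMQ x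
  -- iterates of ψo remain supersolutions
  have hsup_iter : ∀ (n : ℕ) (x : ℝ), Q0 (Q0^[n] ψo) (x - co) ≤ Q0^[n] ψo x := by
    intro n
    induction n with
    | zero => simpa using hsup
    | succ n ih =>
        intro x
        have hM : MemM (Q0^[n] ψo) := hiterM n ψo hψo
        have hMQ : MemM (Q0 (Q0^[n] ψo)) := hmap _ hM
        rw [Function.iterate_succ']
        show Q0 (Q0 (Q0^[n] ψo)) (x - co) ≤ Q0 (Q0^[n] ψo) x
        calc Q0 (Q0 (Q0^[n] ψo)) (x - co)
            = Q0 (fun y => Q0 (Q0^[n] ψo) (y - co)) x := (htrans co _ hMQ x).symm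
          _ ≤ Q0 (Q0^[n] ψo) x :=
              hord _ _ (memM_shift hMQ co) hM ih x
  -- growth of subsolution
  have hgrow : ∀ (n : ℕ) (x : ℝ), ψu (x + n * cu) ≤ Q0^[n] ψu x := by
    intro n
    induction n with
    | zero => intro x; simp
    | succ n ih =>
        intro x
        have h1 : ψu (x + (n + 1 : ℕ) * cu) ≤ Q0^[n] ψu (x + cu) := by
          have := ih (x + cu)
          have heq : (x + cu) + n * cu = x + (n + 1 : ℕ) * cu := by push_cast; ring
          rwa [heq] at this
        have h2 : Q0^[n] ψu (x + cu) ≤ Q0 (Q0^[n] ψu) x := by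
          have := hsub_iter n (x + cu)
          simpa using this
        rw [Function.iterate_succ']
        exact h1.trans h2
  -- decay of supersolution
  have hdecay : ∀ (n : ℕ) (x : ℝ), Q0^[n] ψo x ≤ ψo (x + n * co) := by
    intro n
    induction n with
    | zero => intro x; simp
    | succ n ih =>
        intro x
        have h2 : Q0 (Q0^[n] ψo) x ≤ Q0^[n] ψo (x + co) := by
          have := hsup_iter n (x + co)
          simpa using this
        have h1 : Q0^[n] ψo (x + co) ≤ ψo (x + (n + 1 : ℕ) * co) := by
          have := ih (x + co)
          have heq : (x + co) + n * co = x + (n + 1 : ℕ) * co := by push_cast; ring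
          rwa [heq] at this
        rw [Function.iterate_succ']
        exact h2.trans h1
  -- ψu ≤ ψo
  have hle : ∀ x, ψu x ≤ ψo x := by
    intro x
    rcases le_or_gt x 0 with hx | hx
    · have h1 : ψu x ≤ ψu 0 := hψu.1 hx
      have h2 : (0:ℝ) ≤ ψo x := (hψo.2.2 x).1
      linarith [hψu0 ▸ h1]
    · have h1 : ψo 0 ≤ ψo x := hψo.1 hx.le
      have h2 : ψu x ≤ 1 := (hψu.2.2 x).2
      linarith [hψo0 ▸ h1]
  have hchain : ∀ (n : ℕ) (x : ℝ), ψu (x + n * cu) ≤ ψo (x + n * co) := by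
    intro n x
    calc ψu (x + n * cu) ≤ Q0^[n] ψu x := hgrow n x
      _ ≤ Q0^[n] ψo x := hord_iter n ψu ψo hψu hψo hle x
      _ ≤ ψo (x + n * co) := hdecay n x
  -- now conclude
  by_contra hlt
  push_neg at hlt
  have hd : 0 < cu - co := by linarith
  -- x0 with α < ψu x0
  obtain ⟨x0, hx0⟩ : ∃ x0, α < ψu x0 :=
    (hLu.eventually (eventually_gt_nhds hLu'.1)).exists
  obtain ⟨y0, hy0⟩ : ∃ y0, ψo y0 < α :=
    (hLo.eventually (eventually_lt_nhds hLo'.2)).exists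
  obtain ⟨n, hn⟩ := exists_nat_ge ((x0 - y0) / (cu - co))
  have hn' : x0 - y0 ≤ n * (cu - co) := by
    rw [div_le_iff₀ hd] at hn
    linarith
  set x := y0 - n * co with hx
  have h1 : x0 ≤ x + n * cu := by
    rw [hx]; nlinarith
  have h2 : x + n * co = y0 := by rw [hx]; ring
  have := hchain n x
  rw [h2] at this
  have : α < ψo y0 := lt_of_lt_of_le (lt_of_lt_of_le hx0 (hψu.1 h1)) this
  linarith
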